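/- For all p, q, x, y, a, b ∈ ℂ: θ[p,q](x−y)·θ[p,q](a−b)·θ₁(x−b)·θ₁(a−y) − θ[p,q](x−b)·θ[p,q](a−y)·θ₁(x−y)·θ₁(a−b) + θ[p,q](x−y+a−b)·θ[p,q](0)·θ₁(x−a)·θ₁(y−b) = 0. (This is the genus-one case of Fay's trisecant identity used in the paper; it is equivalent to the Schlesinger transformation S^{(v+w_{ab})}(x,y) = S^{(v)}(x,y) − S^{(v)}(x,b)S^{(v)}(a,y)/S^{(v)}(a,b) of the Baker–Akhiezer kernel in genus one, where w_{ab} is the normalized third-kind differential with residues +1 at a and −1 at b.) -/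

import Mathlib

/-- Genus-one theta function with characteristics:
`θ[p,q](z) = Σ_{n ∈ ℤ} exp(πiμ(n+p)² + 2πi(n+p)(z+q))`. -/
noncomputable def theta (μ p q z : ℂ) : ℂ :=
  ∑' n : ℤ, Complex.exp ((Real.pi : ℂ) * Complex.I * μ * ((n : ℂ) + p) ^ 2 +
    2 * (Real.pi : ℂ) * Complex.I * ((n : ℂ) + p) * (z + q))

/-- The odd theta function `θ₁ = θ[1/2,1/2]`. -/
noncomputable def theta₁ (μ z : ℂ) : ℂ := theta μ (1/2) (1/2) z

namespace FayAux

open Complex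

noncomputable def S (μ c z : ℂ) (n : ℤ) : ℂ :=
  (Real.pi : ℂ) * Complex.I * μ * ((n : ℂ) + c) ^ 2 +
    2 * (Real.pi : ℂ) * Complex.I * ((n : ℂ) + c) * z

noncomputable def trm (μ c z : ℂ) (n : ℤ) : ℂ := Complex.exp (S μ c z n)

lemma theta_eq (μ p q z : ℂ) : theta μ p q z = ∑' n : ℤ, trm μ p (z + q) n := rfl

lemma theta₁_eq (μ z : ℂ) : theta₁ μ z = ∑' n : ℤ, trm μ (1/2) (z + 1/2) n := rfl

lemma trm_eq_jacobi (μ c z : ℂ) (n : ℤ) :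
    trm μ c z n = Complex.exp ((Real.pi : ℂ) * I * μ * c ^ 2 +
      2 * (Real.pi : ℂ) * I * c * z) * jacobiTheta₂_term n (μ * c + z) μ := by
  simp only [trm, S, jacobiTheta₂_term, ← Complex.exp_add]
  congr 1
  ring

lemma summable_norm_trm {μ : ℂ} (hμ : 0 < μ.im) (c z : ℂ) :
    Summable fun n : ℤ => ‖trm μ c z n‖ := by
  have h0 : (0:ℝ) < (Complex.I * ((μ.im : ℝ) : ℂ)).im := by simpa using hμ
  have h1 : Summable fun n : ℤ =>
      jacobiTheta₂_term n (Complex.I * (((μ * c + z).im : ℝ) : ℂ))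
        (Complex.I * ((μ.im : ℝ) : ℂ)) :=
    (summable_jacobiTheta₂_term_iff _ _).mpr h0
  have h2 : Summable fun n : ℤ =>
      Real.exp (-Real.pi * (n : ℝ) ^ 2 * μ.im - 2 * Real.pi * (n : ℝ) * (μ * c + z).im) := by
    rw [← Complex.summable_ofReal]
    refine h1.congr fun n => ?_
    simp only [jacobiTheta₂_term]
    rw [Complex.ofReal_exp]
    congr 1
    push_cast
    linear_combination (2 * (Real.pi : ℂ) * (n : ℂ) * (((μ * c + z).im : ℝ) : ℂ) +
      (Real.pi : ℂ) * (n : ℂ) ^ 2 * ((μ.im : ℝ) : ℂ)) * Complex.I_sq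
  refine (h2.mul_left ‖Complex.exp ((Real.pi : ℂ) * I * μ * c ^ 2 +
      2 * (Real.pi : ℂ) * I * c * z)‖).congr fun n => ?_
  rw [trm_eq_jacobi, norm_mul, norm_jacobiTheta₂_term]

abbrev ι4 := ℤ × ℤ × ℤ × ℤ

lemma theta4 {μ : ℂ} (hμ : 0 < μ.im) (c₁ c₂ c₃ c₄ z₁ z₂ z₃ z₄ : ℂ) :
    (∑' n : ℤ, trm μ c₁ z₁ n) * (∑' n : ℤ, trm μ c₂ z₂ n) *
      (∑' n : ℤ, trm μ c₃ z₃ n) * (∑' n : ℤ, trm μ c₄ z₄ n) =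
    ∑' n : ι4, trm μ c₁ z₁ n.1 * (trm μ c₂ z₂ n.2.1 *
      (trm μ c₃ z₃ n.2.2.1 * trm μ c₄ z₄ n.2.2.2)) := by
  have h₁ := summable_norm_trm hμ c₁ z₁
  have h₂ := summable_norm_trm hμ c₂ z₂
  have h₃ := summable_norm_trm hμ c₃ z₃
  have h₄ := summable_norm_trm hμ c₄ z₄
  rw [mul_assoc, mul_assoc, tsum_mul_tsum_of_summable_norm h₃ h₄,
    tsum_mul_tsum_of_summable_norm h₂ (h₃.mul_norm h₄),
    tsum_mul_tsum_of_summable_norm h₁ (h₂.mul_norm (h₃.mul_norm h₄))]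

lemma summable_norm_F4 {μ : ℂ} (hμ : 0 < μ.im) (c₁ c₂ c₃ c₄ z₁ z₂ z₃ z₄ : ℂ) :
    Summable fun n : ι4 => ‖trm μ c₁ z₁ n.1 * (trm μ c₂ z₂ n.2.1 *
      (trm μ c₃ z₃ n.2.2.1 * trm μ c₄ z₄ n.2.2.2))‖ :=
  ((summable_norm_trm hμ c₁ z₁).mul_norm ((summable_norm_trm hμ c₂ z₂).mul_norm
    ((summable_norm_trm hμ c₃ z₃).mul_norm (summable_norm_trm hμ c₄ z₄)))).congr
    fun _ => rfl

def Ep (v : ι4) : ι4 :=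
  (v.1, v.2.1, v.2.2.1, 2 * v.2.2.2 - v.1 - v.2.1 - v.2.2.1)

def Op (v : ι4) : ι4 :=
  (v.1, v.2.1, v.2.2.1, 2 * v.2.2.2 + 1 - v.1 - v.2.1 - v.2.2.1)

lemma split (F : ι4 → ℂ) (hF : Summable fun n => ‖F n‖) :
    ∑' n : ι4, F n = (∑' v : ι4, F (Ep v)) + ∑' v : ι4, F (Op v) := by
  classical
  set fE : ι4 → ℂ := fun n =>
    if (n.1 + n.2.1 + n.2.2.1 + n.2.2.2) % 2 = 0 then F n else 0 with hfE
  set fO : ι4 → ℂ := fun n =>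
    if (n.1 + n.2.1 + n.2.2.1 + n.2.2.2) % 2 = 0 then 0 else F n with hfO
  have hsE : Summable fE := by
    refine Summable.of_norm_bounded hF fun n => ?_
    simp only [hfE]
    split_ifs <;> simp
  have hsO : Summable fO := by
    refine Summable.of_norm_bounded hF fun n => ?_
    simp only [hfO]
    split_ifs <;> simp
  have h1 : ∑' n : ι4, F n = (∑' n : ι4, fE n) + ∑' n : ι4, fO n := by
    rw [← Summable.tsum_add hsE hsO]
    refine tsum_congr fun n => ?_
    simp only [hfE, hfO]
    split_ifs <;> simp
  rw [h1]
  congr 1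
  · refine tsum_eq_tsum_of_ne_zero_bij (fun x => Ep x.1) ?_ ?_ ?_
    · intro u v huv
      apply Subtype.ext
      obtain ⟨⟨i, j, l, k⟩, _⟩ := u
      obtain ⟨⟨i', j', l', k'⟩, _⟩ := v
      simp only [Ep, Prod.mk.injEq] at huv ⊢
      omega
    · rintro ⟨i, j, l, m⟩ hn
      have hpar : (i + j + l + m) % 2 = 0 := by
        by_contra hc
        exact hn (by simp only [hfE]; rw [if_neg hc])
      have hE : Ep (i, j, l, (i + j + l + m) / 2) = (i, j, l, m) := by
        simp only [Ep, Prod.mk.injEq, true_and, and_true]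
        omega
      have hFn : F (i, j, l, m) ≠ 0 := by
        intro h0
        exact hn (by simp only [hfE]; rw [if_pos hpar]; exact h0)
      exact ⟨⟨(i, j, l, (i + j + l + m) / 2), by
        simpa only [Function.mem_support, hE] using hFn⟩, hE⟩
    · rintro ⟨⟨i, j, l, k⟩, hx⟩
      simp only [hfE, Ep]
      rw [if_pos (by omega)]
  · refine tsum_eq_tsum_of_ne_zero_bij (fun x => Op x.1) ?_ ?_ ?_
    · intro u v huv
      apply Subtype.ext
      obtain ⟨⟨i, j, l, k⟩, _⟩ := u
      obtain ⟨⟨i', j', l', k'⟩, _⟩ := v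
      simp only [Op, Prod.mk.injEq] at huv ⊢
      omega
    · rintro ⟨i, j, l, m⟩ hn
      have hpar : ¬ (i + j + l + m) % 2 = 0 := by
        intro hc
        exact hn (by simp only [hfO]; rw [if_pos hc])
      have hE : Op (i, j, l, (i + j + l + m) / 2) = (i, j, l, m) := by
        simp only [Op, Prod.mk.injEq, true_and, and_true]
        omega
      have hFn : F (i, j, l, m) ≠ 0 := by
        intro h0
        exact hn (by simp only [hfO]; rw [if_neg hpar]; exact h0)
      exact ⟨⟨(i, j, l, (i + j + l + m) / 2), by
        simpa only [Function.mem_support, hE] using hFn⟩, hE⟩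
    · rintro ⟨⟨i, j, l, k⟩, hx⟩
      simp only [hfO, Op]
      rw [if_neg (by omega)]

def gmap (v : ι4) : ι4 :=
  (v.1 + v.2.1 + v.2.2.1 - v.2.2.2, v.2.2.2 - v.2.2.1, v.2.2.2 - v.2.1, v.2.2.2)

def gE : ι4 ≃ ι4 :=
  ⟨gmap, gmap,
    by rintro ⟨i, j, l, k⟩; simp only [gmap, Prod.mk.injEq, true_and, and_true]; omega,
    by rintro ⟨i, j, l, k⟩; simp only [gmap, Prod.mk.injEq, true_and, and_true]; omega⟩

def hmap (v : ι4) : ι4 :=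
  (v.2.2.2 + 1, v.1 + v.2.1 - v.2.2.2 - 1, v.1 + v.2.2.1 - v.2.2.2 - 1,
    v.1 + v.2.1 + v.2.2.1 - v.2.2.2 - 1)

def hinv (v : ι4) : ι4 :=
  (v.1 + v.2.1 + v.2.2.1 - v.2.2.2, v.2.2.2 - v.2.2.1, v.2.2.2 - v.2.1, v.1 - 1)

def hE : ι4 ≃ ι4 :=
  ⟨hmap, hinv,
    by rintro ⟨i, j, l, k⟩; simp only [hmap, hinv, Prod.mk.injEq, true_and, and_true]; omega,
    by rintro ⟨i, j, l, k⟩; simp only [hmap, hinv, Prod.mk.injEq, true_and, and_true]; omega⟩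

def h2map (v : ι4) : ι4 :=
  (v.2.2.2 + 1, v.1 + v.2.1 - v.2.2.2 - 1, v.1 + v.2.2.1 - v.2.2.2 - 1, v.1 - 1)

def h2inv (v : ι4) : ι4 :=
  (v.2.2.2 + 1, v.2.1 + v.1 - v.2.2.2 - 1, v.2.2.1 + v.1 - v.2.2.2 - 1, v.1 - 1)

def h2E : ι4 ≃ ι4 :=
  ⟨h2map, h2inv,
    by rintro ⟨i, j, l, k⟩; simp only [h2map, h2inv, Prod.mk.injEq, true_and, and_true]; omega,
    by rintro ⟨i, j, l, k⟩; simp only [h2map, h2inv, Prod.mk.injEq, true_and, and_true]; omega⟩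

lemma exp_eq_exp_of (m : ℤ) {A B : ℂ} (h : A = B + (m : ℂ) * (2 * (Real.pi : ℂ) * I)) :
    Complex.exp A = Complex.exp B := by
  rw [h, Complex.exp_add, Complex.exp_int_mul_two_pi_mul_I, mul_one]

lemma exp_eq_neg_exp_of (m : ℤ) {A B : ℂ} (h : A = B + (m : ℂ) * (2 * (Real.pi : ℂ) * I) +
    (Real.pi : ℂ) * I) : Complex.exp A = -Complex.exp B := by
  rw [h, Complex.exp_add, Complex.exp_add, Complex.exp_int_mul_two_pi_mul_I,
    Complex.exp_pi_mul_I]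
  ring

variable (μ p q x y a b : ℂ)

noncomputable def F1 (n : ι4) : ℂ :=
  trm μ p (x - y + q) n.1 * (trm μ p (a - b + q) n.2.1 *
    (trm μ (1/2) (x - b + 1/2) n.2.2.1 * trm μ (1/2) (a - y + 1/2) n.2.2.2))

noncomputable def F2 (n : ι4) : ℂ :=
  trm μ p (x - b + q) n.1 * (trm μ p (a - y + q) n.2.1 *
    (trm μ (1/2) (x - y + 1/2) n.2.2.1 * trm μ (1/2) (a - b + 1/2) n.2.2.2))

noncomputable def F3 (n : ι4) : ℂ :=
  trm μ p (x - y + a - b + q) n.1 * (trm μ p (0 + q) n.2.1 *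
    (trm μ (1/2) (x - a + 1/2) n.2.2.1 * trm μ (1/2) (y - b + 1/2) n.2.2.2))

lemma claimA (v : ι4) :
    F1 μ p q x y a b (Ep v) = F2 μ p q x y a b (Ep (gE v)) := by
  obtain ⟨i, j, l, k⟩ := v
  simp only [F1, F2, Ep, gE, gmap, Equiv.coe_fn_mk, trm, S, ← Complex.exp_add]
  congr 1
  push_cast
  ring

lemma claimB (v : ι4) :
    F1 μ p q x y a b (Op v) = -F3 μ p q x y a b (Ep (hE v)) := by
  obtain ⟨i, j, l, k⟩ := v
  simp only [F1, F3, Ep, Op, hE, hmap, Equiv.coe_fn_mk, trm, S, ← Complex.exp_add]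
  exact exp_eq_neg_exp_of (2 * k + 1 - i - j - l) (by push_cast; ring)

lemma claimC (v : ι4) :
    F2 μ p q x y a b (Op v) = F3 μ p q x y a b (Op (h2E v)) := by
  obtain ⟨i, j, l, k⟩ := v
  simp only [F2, F3, Op, h2E, h2map, Equiv.coe_fn_mk, trm, S, ← Complex.exp_add]
  exact exp_eq_exp_of (k + 1 - i) (by push_cast; ring)

end FayAux

open FayAux

/-- The genus-one case of Fay's trisecant identity:
`θ[p,q](x−y)θ[p,q](a−b)θ₁(x−b)θ₁(a−y) − θ[p,q](x−b)θ[p,q](a−y)θ₁(x−y)θ₁(a−b)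
 + θ[p,q](x−y+a−b)θ[p,q](0)θ₁(x−a)θ₁(y−b) = 0`. -/
theorem fay_trisecant_genus_one (μ : ℂ) (hμ : 0 < μ.im) (p q x y a b : ℂ) :
    theta μ p q (x - y) * theta μ p q (a - b) * theta₁ μ (x - b) * theta₁ μ (a - y) -
      theta μ p q (x - b) * theta μ p q (a - y) * theta₁ μ (x - y) * theta₁ μ (a - b) +
      theta μ p q (x - y + a - b) * theta μ p q 0 * theta₁ μ (x - a) * theta₁ μ (y - b)
      = 0 := by
  have T1eq : theta μ p q (x - y) * theta μ p q (a - b) * theta₁ μ (x - b) *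
      theta₁ μ (a - y) = ∑' n : ι4, F1 μ p q x y a b n := by
    rw [theta_eq, theta_eq, theta₁_eq, theta₁_eq, theta4 hμ]
    simp only [F1]
  have T2eq : theta μ p q (x - b) * theta μ p q (a - y) * theta₁ μ (x - y) *
      theta₁ μ (a - b) = ∑' n : ι4, F2 μ p q x y a b n := by
    rw [theta_eq, theta_eq, theta₁_eq, theta₁_eq, theta4 hμ]
    simp only [F2]
  have T3eq : theta μ p q (x - y + a - b) * theta μ p q 0 * theta₁ μ (x - a) *
      theta₁ μ (y - b) = ∑' n : ι4, F3 μ p q x y a b n := by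
    rw [theta_eq, theta_eq, theta₁_eq, theta₁_eq, theta4 hμ]
    simp only [F3]
  have sF1 : Summable fun n : ι4 => ‖F1 μ p q x y a b n‖ := by
    have := summable_norm_F4 hμ p p (1/2) (1/2) (x - y + q) (a - b + q)
      (x - b + 1/2) (a - y + 1/2)
    simpa only [F1] using this
  have sF2 : Summable fun n : ι4 => ‖F2 μ p q x y a b n‖ := by
    have := summable_norm_F4 hμ p p (1/2) (1/2) (x - b + q) (a - y + q)
      (x - y + 1/2) (a - b + 1/2)
    simpa only [F2] using this
  have sF3 : Summable fun n : ι4 => ‖F3 μ p q x y a b n‖ := by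
    have := summable_norm_F4 hμ p p (1/2) (1/2) (x - y + a - b + q) (0 + q)
      (x - a + 1/2) (y - b + 1/2)
    simpa only [F3] using this
  have e1 : (∑' v : ι4, F1 μ p q x y a b (Ep v)) = ∑' v : ι4, F2 μ p q x y a b (Ep v) := by
    rw [← Equiv.tsum_eq gE (fun v => F2 μ p q x y a b (Ep v))]
    exact tsum_congr (claimA μ p q x y a b)
  have e2 : (∑' v : ι4, F1 μ p q x y a b (Op v)) = -∑' v : ι4, F3 μ p q x y a b (Ep v) := by
    rw [← Equiv.tsum_eq hE (fun v => F3 μ p q x y a b (Ep v)), ← tsum_neg]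
    exact tsum_congr (claimB μ p q x y a b)
  have e3 : (∑' v : ι4, F2 μ p q x y a b (Op v)) = ∑' v : ι4, F3 μ p q x y a b (Op v) := by
    rw [← Equiv.tsum_eq h2E (fun v => F3 μ p q x y a b (Op v))]
    exact tsum_congr (claimC μ p q x y a b)
  rw [T1eq, T2eq, T3eq, split _ sF1, split _ sF2, split _ sF3, e1, e2, e3]
  ring
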